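/- For n ≥ 2, the set of elements of the intersection-completion of the maximal codewords of the code C_n that are not in C_n consists of exactly one element, namely the singleton {n+1}. -/

import Mathlib

/-- The code `C_n ⊆ 2^{[2n+2]}`, with ground set `{1, …, 2n+2} ⊆ ℕ`. -/
def Cn (n : ℕ) : Set (Finset ℕ) :=
  {∅}
  ∪ {s | ∃ σ : Finset ℕ, σ.Nonempty ∧ σ ⊂ Finset.Icc 1 n ∧ s = σ ∪ {n + 1}}
  ∪ {s | ∃ i, 1 ≤ i ∧ i ≤ n + 1 ∧ s = {n + 1 + i}}
  ∪ {s | ∃ i, 1 ≤ i ∧ i ≤ n ∧ s = (Finset.Icc 1 n \ {i}) ∪ {n + 1} ∪ {n + 1 + i}}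
  ∪ {Finset.Icc 1 n ∪ {n + 1} ∪ {2 * n + 2}}
  ∪ {Finset.Icc (n + 2) (2 * n + 2)}

/-- The maximal codewords of a code. -/
def maxCodewords (C : Set (Finset ℕ)) : Set (Finset ℕ) :=
  {c ∈ C | ∀ c' ∈ C, c ⊆ c' → c' = c}

def Mi (n i : ℕ) : Finset ℕ := (Finset.Icc 1 n \ {i}) ∪ {n + 1} ∪ {n + 1 + i}
def Mtop (n : ℕ) : Finset ℕ := Finset.Icc 1 n ∪ {n + 1} ∪ {2 * n + 2}
def Mlast (n : ℕ) : Finset ℕ := Finset.Icc (n + 2) (2 * n + 2)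

lemma mem_Mi {n i x : ℕ} : x ∈ Mi n i ↔ ((1 ≤ x ∧ x ≤ n ∧ x ≠ i) ∨ x = n + 1 ∨ x = n + 1 + i) := by
  simp only [Mi, Finset.mem_union, Finset.mem_sdiff, Finset.mem_Icc, Finset.mem_singleton]
  omega

lemma mem_Mtop {n x : ℕ} : x ∈ Mtop n ↔ ((1 ≤ x ∧ x ≤ n) ∨ x = n + 1 ∨ x = 2 * n + 2) := by
  simp only [Mtop, Finset.mem_union, Finset.mem_Icc, Finset.mem_singleton]
  tauto

lemma mem_Mlast {n x : ℕ} : x ∈ Mlast n ↔ (n + 2 ≤ x ∧ x ≤ 2 * n + 2) := by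
  simp only [Mlast, Finset.mem_Icc]

lemma mem_Cn {n : ℕ} {s : Finset ℕ} : s ∈ Cn n ↔
    s = ∅ ∨ (∃ σ : Finset ℕ, σ.Nonempty ∧ σ ⊂ Finset.Icc 1 n ∧ s = σ ∪ {n + 1})
    ∨ (∃ i, 1 ≤ i ∧ i ≤ n + 1 ∧ s = {n + 1 + i})
    ∨ (∃ i, 1 ≤ i ∧ i ≤ n ∧ s = Mi n i)
    ∨ s = Mtop n ∨ s = Mlast n := by
  simp only [Cn, Mi, Mtop, Mlast, Set.mem_union, Set.mem_setOf_eq, Set.mem_singleton_iff,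
    Finset.union_assoc, or_assoc]

lemma mem_maxCodewords {C : Set (Finset ℕ)} {c : Finset ℕ} :
    c ∈ maxCodewords C ↔ c ∈ C ∧ ∀ c' ∈ C, c ⊆ c' → c' = c := Iff.rfl

lemma mem_inf' {S : Finset (Finset ℕ)} (hS : S.Nonempty) {x : ℕ} :
    x ∈ S.inf' hS id ↔ ∀ c ∈ S, x ∈ c := by
  constructor
  · intro h c hc
    exact (Finset.inf'_le id hc : S.inf' hS id ⊆ c) h
  · intro h
    exact (Finset.le_inf' hS id fun c hc => Finset.singleton_subset_iff.mpr (h c hc) :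
      ({x} : Finset ℕ) ⊆ S.inf' hS id) (Finset.mem_singleton_self x)

lemma Mi_mem_Cn {n i : ℕ} (h1 : 1 ≤ i) (h2 : i ≤ n) : Mi n i ∈ Cn n :=
  mem_Cn.mpr (Or.inr (Or.inr (Or.inr (Or.inl ⟨i, h1, h2, rfl⟩))))

lemma Mtop_mem_Cn {n : ℕ} : Mtop n ∈ Cn n :=
  mem_Cn.mpr (Or.inr (Or.inr (Or.inr (Or.inr (Or.inl rfl)))))

lemma Mlast_mem_Cn {n : ℕ} : Mlast n ∈ Cn n :=
  mem_Cn.mpr (Or.inr (Or.inr (Or.inr (Or.inr (Or.inr rfl)))))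

/-- Each `Mi n i` is a maximal codeword. -/
lemma Mi_maximal {n i : ℕ} (hn : 2 ≤ n) (h1 : 1 ≤ i) (h2 : i ≤ n) :
    Mi n i ∈ maxCodewords (Cn n) := by
  refine ⟨Mi_mem_Cn h1 h2, fun c' hc' hsub => ?_⟩
  rcases mem_Cn.mp hc' with h | ⟨σ, hne, hss, h⟩ | ⟨j, hj1, hj2, h⟩ | ⟨j, hj1, hj2, h⟩ | h | h
  · exfalso
    have := hsub (mem_Mi.mpr (by omega : _ ∨ n + 1 = n + 1 ∨ _))
    simp [h] at this
  · exfalso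
    have := hsub (mem_Mi.mpr (Or.inr (Or.inr rfl)))
    rw [h, Finset.mem_union, Finset.mem_singleton] at this
    rcases this with hmem | hmem
    · have := (hss.subset hmem); rw [Finset.mem_Icc] at this; omega
    · omega
  · exfalso
    have := hsub (mem_Mi.mpr (by omega : _ ∨ n + 1 = n + 1 ∨ _))
    rw [h, Finset.mem_singleton] at this; omega
  · have := hsub (mem_Mi.mpr (Or.inr (Or.inr rfl)))
    rw [h] at this ⊢
    rw [mem_Mi] at this
    have : i = j := by omega
    rw [this]
  · exfalso
    have := hsub (mem_Mi.mpr (Or.inr (Or.inr rfl)))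
    rw [h, mem_Mtop] at this; omega
  · exfalso
    have := hsub (mem_Mi.mpr (by omega : _ ∨ n + 1 = n + 1 ∨ _))
    rw [h, mem_Mlast] at this; omega

/-- Every maximal codeword is one of the `Mi`, `Mtop`, `Mlast`. -/
lemma maxCodewords_subset {n : ℕ} (hn : 2 ≤ n) {c : Finset ℕ}
    (hc : c ∈ maxCodewords (Cn n)) :
    (∃ i, 1 ≤ i ∧ i ≤ n ∧ c = Mi n i) ∨ c = Mtop n ∨ c = Mlast n := by
  obtain ⟨hmem, hmax⟩ := hc
  rcases mem_Cn.mp hmem with h | ⟨σ, hne, hss, h⟩ | ⟨j, hj1, hj2, h⟩ | ⟨j, hj1, hj2, h⟩ | h | h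
  · -- c = ∅ : impossible, since Mi n 1 would have to equal ∅
    exfalso
    have h1 := hmax (Mi n 1) (Mi_mem_Cn le_rfl (by omega)) (by rw [h]; exact Finset.empty_subset _)
    have : n + 1 ∈ Mi n 1 := mem_Mi.mpr (Or.inr (Or.inl rfl))
    rw [h1, h] at this
    simp at this
  · -- c = σ ∪ {n+1} with σ ⊊ [n] : c ⊆ Mi n i for i ∉ σ
    obtain ⟨i, hiIcc, hiσ⟩ := Finset.exists_of_ssubset hss
    rw [Finset.mem_Icc] at hiIcc
    have hsub : c ⊆ Mi n i := by
      intro x hx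
      rw [h, Finset.mem_union, Finset.mem_singleton] at hx
      rcases hx with hx | hx
      · have hx' := hss.subset hx
        rw [Finset.mem_Icc] at hx'
        have : x ≠ i := fun e => hiσ (e ▸ hx)
        exact mem_Mi.mpr (Or.inl ⟨hx'.1, hx'.2, this⟩)
      · exact mem_Mi.mpr (Or.inr (Or.inl hx))
    have := hmax (Mi n i) (Mi_mem_Cn hiIcc.1 hiIcc.2) hsub
    exact Or.inl ⟨i, hiIcc.1, hiIcc.2, this.symm⟩
  · -- c = {n+1+j} : c ⊆ Mlast n
    have hsub : c ⊆ Mlast n := by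
      rw [h]
      exact Finset.singleton_subset_iff.mpr (mem_Mlast.mpr (by omega))
    exact Or.inr (Or.inr (hmax (Mlast n) Mlast_mem_Cn hsub).symm)
  · exact Or.inl ⟨j, hj1, hj2, h⟩
  · exact Or.inr (Or.inl h)
  · exact Or.inr (Or.inr h)

lemma singleton_not_mem_Cn {n : ℕ} (hn : 2 ≤ n) : ({n + 1} : Finset ℕ) ∉ Cn n := by
  intro h
  rcases mem_Cn.mp h with h | ⟨σ, hne, hss, h⟩ | ⟨j, hj1, hj2, h⟩ | ⟨j, hj1, hj2, h⟩ | h | h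
  · exact absurd h (Finset.singleton_ne_empty _)
  · obtain ⟨a, ha⟩ := hne
    have h1 : a ∈ ({n + 1} : Finset ℕ) := by
      rw [h, Finset.mem_union]; exact Or.inl ha
    have h2 := hss.subset ha
    rw [Finset.mem_Icc] at h2
    rw [Finset.mem_singleton] at h1
    omega
  · have : (n + 1 : ℕ) ∈ ({n + 1 + j} : Finset ℕ) := h ▸ Finset.mem_singleton_self _
    rw [Finset.mem_singleton] at this; omega
  · have : n + 1 + j ∈ ({n + 1} : Finset ℕ) := h ▸ mem_Mi.mpr (Or.inr (Or.inr rfl))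
    rw [Finset.mem_singleton] at this; omega
  · have : 2 * n + 2 ∈ ({n + 1} : Finset ℕ) :=
      h ▸ mem_Mtop.mpr (Or.inr (Or.inr rfl))
    rw [Finset.mem_singleton] at this; omega
  · have : n + 2 ∈ ({n + 1} : Finset ℕ) := h ▸ mem_Mlast.mpr (by omega)
    rw [Finset.mem_singleton] at this; omega

/-- For `n ≥ 2`, the only intersection of maximal codewords of `C_n` that is not itself a
codeword of `C_n` is the singleton `{n+1}`. -/
theorem Cn_missing_max_intersection (n : ℕ) (hn : 2 ≤ n) :
    {σ : Finset ℕ |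
        (∃ (S : Finset (Finset ℕ)) (hS : S.Nonempty), ↑S ⊆ maxCodewords (Cn n) ∧ σ = S.inf' hS id) ∧
        σ ∉ Cn n} = {({n + 1} : Finset ℕ)} := by
  ext σ
  simp only [Set.mem_setOf_eq, Set.mem_singleton_iff]
  constructor
  · rintro ⟨⟨S, hS, hSmax, rfl⟩, hnot⟩
    have hclass : ∀ c ∈ S, (∃ i, 1 ≤ i ∧ i ≤ n ∧ c = Mi n i) ∨ c = Mtop n ∨ c = Mlast n :=
      fun c hc => maxCodewords_subset hn (hSmax (Finset.mem_coe.mpr hc))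
    by_cases hlast : Mlast n ∈ S
    · exfalso
      by_cases hother : ∃ c ∈ S, c ≠ Mlast n
      · obtain ⟨c, hcS, hcne⟩ := hother
        -- the intersection is contained in a singleton {n+1+j}, hence in Cn
        have key : ∃ j, 1 ≤ j ∧ j ≤ n + 1 ∧ S.inf' hS id ⊆ {n + 1 + j} := by
          rcases hclass c hcS with ⟨i, hi1, hi2, rfl⟩ | rfl | rfl
          · refine ⟨i, hi1, by omega, fun x hx => ?_⟩
            have hx1 := (mem_inf' hS).mp hx _ hcS
            have hx2 := (mem_inf' hS).mp hx _ hlast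
            rw [mem_Mi] at hx1; rw [mem_Mlast] at hx2
            rw [Finset.mem_singleton]; omega
          · refine ⟨n + 1, by omega, le_rfl, fun x hx => ?_⟩
            have hx1 := (mem_inf' hS).mp hx _ hcS
            have hx2 := (mem_inf' hS).mp hx _ hlast
            rw [mem_Mtop] at hx1; rw [mem_Mlast] at hx2
            rw [Finset.mem_singleton]; omega
          · exact absurd rfl hcne
        obtain ⟨j, hj1, hj2, hsub⟩ := key
        rcases Finset.subset_singleton_iff.mp hsub with h | h
        · exact hnot (mem_Cn.mpr (Or.inl h))
        · exact hnot (mem_Cn.mpr (Or.inr (Or.inr (Or.inl ⟨j, hj1, hj2, h⟩))))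
      · push_neg at hother
        have heq : S.inf' hS id = Mlast n :=
          le_antisymm (Finset.inf'_le id hlast)
            (Finset.le_inf' hS id fun c hc => (hother c hc) ▸ le_rfl)
        exact hnot (heq ▸ Mlast_mem_Cn)
    · have hclass' : ∀ c ∈ S, (∃ i, 1 ≤ i ∧ i ≤ n ∧ c = Mi n i) ∨ c = Mtop n := by
        intro c hc
        rcases hclass c hc with h | h | h
        · exact Or.inl h
        · exact Or.inr h
        · exact absurd (h ▸ hc) hlast
      obtain ⟨c₀, hc₀⟩ := hS
      by_cases hsingle : ∀ c ∈ S, c = c₀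
      · exfalso
        have heq : S.inf' ⟨c₀, hc₀⟩ id = c₀ :=
          le_antisymm (Finset.inf'_le id hc₀)
            (Finset.le_inf' _ id fun c hc => le_of_eq (congrArg id (hsingle c hc)).symm)
        have hc0Cn : c₀ ∈ Cn n := (hSmax (Finset.mem_coe.mpr hc₀)).1
        rw [heq] at hnot
        exact hnot hc0Cn
      · push_neg at hsingle
        obtain ⟨c₁, hc₁, hne01⟩ := hsingle
        set τ := S.inf' ⟨c₀, hc₀⟩ id with hτ
        have hMiS : ∃ i, 1 ≤ i ∧ i ≤ n ∧ Mi n i ∈ S := by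
          rcases hclass' c₀ hc₀ with ⟨i, h1, h2, he⟩ | he0
          · exact ⟨i, h1, h2, he ▸ hc₀⟩
          · rcases hclass' c₁ hc₁ with ⟨i, h1, h2, he⟩ | he1
            · exact ⟨i, h1, h2, he ▸ hc₁⟩
            · exact absurd (he1.trans he0.symm) hne01
        obtain ⟨i0, hi01, hi02, hi0S⟩ := hMiS
        have hn1 : n + 1 ∈ τ := by
          rw [hτ]; refine (mem_inf' _).mpr ?_
          intro c hc
          rcases hclass' c hc with ⟨i, _, _, rfl⟩ | rfl
          · exact mem_Mi.mpr (Or.inr (Or.inl rfl))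
          · exact mem_Mtop.mpr (Or.inr (Or.inl rfl))
        have hbound : ∀ x ∈ τ, 1 ≤ x ∧ x ≤ n + 1 := by
          intro x hx
          have hx0 := (mem_inf' _).mp hx c₀ hc₀
          have hx1 := (mem_inf' _).mp hx c₁ hc₁
          rcases hclass' c₀ hc₀ with ⟨i, hia, hib, he0⟩ | he0 <;>
            rcases hclass' c₁ hc₁ with ⟨j, hja, hjb, he1⟩ | he1
          · rw [he0, mem_Mi] at hx0; rw [he1, mem_Mi] at hx1
            by_contra hcon
            have hij : i = j := by omega
            exact hne01 (by rw [he1, he0, hij])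
          · rw [he0, mem_Mi] at hx0; rw [he1, mem_Mtop] at hx1; omega
          · rw [he0, mem_Mtop] at hx0; rw [he1, mem_Mi] at hx1; omega
          · exact absurd (he1.trans he0.symm) hne01
        have hi0not : i0 ∉ τ := by
          intro hmem
          have := (mem_inf' _).mp hmem _ hi0S
          rw [mem_Mi] at this; omega
        have hform : τ = τ.erase (n + 1) ∪ {n + 1} := by
          ext x
          rw [Finset.mem_union, Finset.mem_erase, Finset.mem_singleton]
          constructor
          · intro hx
            by_cases hxe : x = n + 1
            · exact Or.inr hxe
            · exact Or.inl ⟨hxe, hx⟩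
          · rintro (⟨_, hx⟩ | rfl)
            · exact hx
            · exact hn1
        by_cases hempty : τ.erase (n + 1) = ∅
        · rw [hform, hempty, Finset.empty_union]
        · exfalso
          apply hnot
          rw [mem_Cn]
          refine Or.inr (Or.inl ⟨τ.erase (n + 1),
            Finset.nonempty_iff_ne_empty.mpr hempty, ?_, hform⟩)
          have hsub : τ.erase (n + 1) ⊆ Finset.Icc 1 n := by
            intro x hx
            rw [Finset.mem_erase] at hx
            have := hbound x hx.2
            rw [Finset.mem_Icc]
            have := hx.1
            omega
          exact (Finset.ssubset_iff_of_subset hsub).mpr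
            ⟨i0, Finset.mem_Icc.mpr ⟨hi01, hi02⟩,
              fun hmem => hi0not (Finset.mem_of_mem_erase hmem)⟩
  · rintro rfl
    have h1n : (1 : ℕ) ∈ Finset.Icc 1 n := Finset.mem_Icc.mpr ⟨le_rfl, by omega⟩
    have hne : ((Finset.Icc 1 n).image (Mi n)).Nonempty :=
      ⟨Mi n 1, Finset.mem_image_of_mem _ h1n⟩
    refine ⟨⟨(Finset.Icc 1 n).image (Mi n), hne, ?_, ?_⟩, singleton_not_mem_Cn hn⟩
    · intro c hc
      simp only [Finset.coe_image, Set.mem_image, Finset.mem_coe, Finset.mem_Icc] at hc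
      obtain ⟨i, ⟨hi1, hi2⟩, rfl⟩ := hc
      exact Mi_maximal hn hi1 hi2
    · ext x
      rw [mem_inf', Finset.mem_singleton]
      have hforall : (∀ c ∈ (Finset.Icc 1 n).image (Mi n), x ∈ c) ↔
          ∀ i, 1 ≤ i → i ≤ n → x ∈ Mi n i := by
        constructor
        · intro h i h1 h2
          exact h _ (Finset.mem_image_of_mem _ (Finset.mem_Icc.mpr ⟨h1, h2⟩))
        · intro h c hc
          obtain ⟨i, hi, rfl⟩ := Finset.mem_image.mp hc
          rw [Finset.mem_Icc] at hi
          exact h i hi.1 hi.2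
      rw [hforall]
      constructor
      · rintro rfl
        intro i h1 h2
        exact mem_Mi.mpr (by omega)
      · intro h
        have ha := mem_Mi.mp (h 1 le_rfl (by omega))
        have hb := mem_Mi.mp (h 2 (by omega) hn)
        by_cases hx : 1 ≤ x ∧ x ≤ n
        · have hc := mem_Mi.mp (h x hx.1 hx.2)
          omega
        · omega
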